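/- arXiv:2103.14059 — 2 statements merged into one kernel-verified Lean document; each statement's English description precedes it below -/
import Mathlib

section
/- Let k : [0,1] → ℝ be continuous, positive on (0,1], with k(0)=0, and suppose there exists M₁ ∈ (0,1) such that x·k'(x) ≤ M₁·k(x) for a.e. x ∈ [0,1]. Then the function p(x) = ∫₀ˣ y/k(y) dy is well-defined and finite for every x ∈ [0,1], i.e., y/k(y) is integrable on (0,1). -/
open MeasureTheory Real Set

/-- For `k` weakly degenerate at 0 with `M₁ ∈ (0,1)`, the function `y ↦ y / k y`
is integrable on `(0,1)`, so `p(x) = ∫₀ˣ y / k y dy` is well defined and finite. -/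
theorem stmt1 (k k' : ℝ → ℝ) (M₁ : ℝ) (hM : M₁ ∈ Set.Ioo (0 : ℝ) 1)
    (hcont : ContinuousOn k (Set.Icc 0 1))
    (hpos : ∀ x ∈ Set.Ioc (0 : ℝ) 1, 0 < k x)
    (hk0 : k 0 = 0)
    (hderiv : ∀ x ∈ Set.Ioo (0 : ℝ) 1, HasDerivAt k (k' x) x)
    (hW11 : IntegrableOn k' (Set.Icc 0 1))
    (hineq : ∀ᵐ x, x ∈ Set.Icc (0 : ℝ) 1 → x * k' x ≤ M₁ * k x) :
    IntegrableOn (fun y => y / k y) (Set.Ioo 0 1) := by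
  obtain ⟨hM0, hM1⟩ := hM
  set c : ℝ := k 2⁻¹ * (2⁻¹ : ℝ) ^ (-M₁) with hc_def
  have hc : 0 < c :=
    mul_pos (hpos _ ⟨by norm_num, by norm_num⟩) (rpow_pos_of_pos (by norm_num) _)
  -- key lower bound: k y ≥ c * y ^ M₁ on (0, 1/2]
  have key : ∀ y ∈ Ioc (0 : ℝ) 2⁻¹, c * y ^ M₁ ≤ k y := by
    intro y hy
    have hy0 : 0 < y := hy.1
    have hy2 : y ≤ 2⁻¹ := hy.2
    set g' : ℝ → ℝ := fun x => k' x * x ^ (-M₁) + k x * (-M₁ * x ^ (-M₁ - 1)) with hg'_def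
    have hsub : Icc y (2⁻¹ : ℝ) ⊆ Icc 0 1 := Icc_subset_Icc hy0.le (by norm_num)
    have hg : ∀ x ∈ uIcc y (2⁻¹ : ℝ), HasDerivAt (fun x => k x * x ^ (-M₁)) (g' x) x := by
      intro x hx
      rw [uIcc_of_le hy2] at hx
      have hx0 : 0 < x := lt_of_lt_of_le hy0 hx.1
      have hx1 : x < 1 := lt_of_le_of_lt hx.2 (by norm_num)
      exact (hderiv x ⟨hx0, hx1⟩).mul (Real.hasDerivAt_rpow_const (Or.inl hx0.ne'))
    have hposIcc : ∀ x ∈ Icc y (2⁻¹ : ℝ), 0 < x := fun x hx => lt_of_lt_of_le hy0 hx.1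
    have hint1 : IntervalIntegrable (fun x => k' x * x ^ (-M₁)) volume y 2⁻¹ := by
      have h1 : IntervalIntegrable k' volume y 2⁻¹ :=
        (intervalIntegrable_iff_integrableOn_Icc_of_le hy2).mpr (hW11.mono_set hsub)
      exact h1.mul_continuousOn (by
        rw [uIcc_of_le hy2]
        exact ContinuousOn.rpow_const continuousOn_id
          (fun x hx => Or.inl (hposIcc x hx).ne'))
    have hint2 : IntervalIntegrable (fun x => k x * (-M₁ * x ^ (-M₁ - 1))) volume y 2⁻¹ := by
      apply ContinuousOn.intervalIntegrable
      rw [uIcc_of_le hy2]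
      exact (hcont.mono hsub).mul (continuousOn_const.mul
        (ContinuousOn.rpow_const continuousOn_id (fun x hx => Or.inl (hposIcc x hx).ne')))
    have hint : IntervalIntegrable g' volume y 2⁻¹ := hint1.add hint2
    have hftc : ∫ x in y..2⁻¹, g' x = k 2⁻¹ * (2⁻¹ : ℝ) ^ (-M₁) - k y * y ^ (-M₁) :=
      intervalIntegral.integral_eq_sub_of_hasDerivAt hg hint
    -- a.e. nonpositivity of g' on [y, 1/2]
    have hae : ∀ᵐ x ∂(volume.restrict (Icc y (2⁻¹ : ℝ))), 0 ≤ -g' x := by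
      filter_upwards [ae_restrict_of_ae hineq, ae_restrict_mem measurableSet_Icc]
        with x hx hmem
      have hx0 : 0 < x := hposIcc x hmem
      have h := hx (hsub hmem)
      have hxp : (0 : ℝ) < x ^ (-M₁ - 1) := rpow_pos_of_pos hx0 _
      have hrw : k' x * x ^ (-M₁) = x * k' x * x ^ (-M₁ - 1) := by
        rw [show (-M₁ : ℝ) = 1 + (-M₁ - 1) by ring, Real.rpow_add hx0, Real.rpow_one]; ring
      have : g' x = (x * k' x - M₁ * k x) * x ^ (-M₁ - 1) := by
        simp only [hg'_def]; rw [hrw]; ring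
      rw [this]
      have : (x * k' x - M₁ * k x) * x ^ (-M₁ - 1) ≤ 0 :=
        mul_nonpos_of_nonpos_of_nonneg (by linarith) hxp.le
      linarith
    have hnonpos : ∫ x in y..2⁻¹, g' x ≤ 0 := by
      have h0 : 0 ≤ ∫ x in y..2⁻¹, -g' x :=
        intervalIntegral.integral_nonneg_of_ae_restrict hy2 hae
      rw [intervalIntegral.integral_neg] at h0
      linarith
    have hkey : c ≤ k y * y ^ (-M₁) := by rw [hftc] at hnonpos; rw [hc_def]; linarith
    calc c * y ^ M₁ ≤ k y * y ^ (-M₁) * y ^ M₁ :=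
          mul_le_mul_of_nonneg_right hkey (rpow_nonneg hy0.le _)
      _ = k y := by rw [mul_assoc, ← Real.rpow_add hy0]; simp
  -- integrable on (0, 1/2]
  have hsub1 : Ioc (0:ℝ) 2⁻¹ ⊆ Icc 0 1 := fun x hx => ⟨hx.1.le, hx.2.trans (by norm_num)⟩
  have hmeas : AEStronglyMeasurable (fun y => y / k y) (volume.restrict (Ioc 0 (2⁻¹ : ℝ))) := by
    apply ContinuousOn.aestronglyMeasurable _ measurableSet_Ioc
    exact ContinuousOn.div continuousOn_id (hcont.mono hsub1)
      (fun x hx => (hpos x ⟨hx.1, hx.2.trans (by norm_num)⟩).ne')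
  have hI1 : IntegrableOn (fun y => y / k y) (Ioc 0 (2⁻¹ : ℝ)) := by
    apply Integrable.mono' (g := fun _ => 1 / c)
      ((integrableOn_const_iff (C := 1 / c)).mpr (Or.inr measure_Ioc_lt_top)) hmeas
    filter_upwards [ae_restrict_mem measurableSet_Ioc] with y hy
    have hy0 : 0 < y := hy.1
    have hky : 0 < k y := hpos y ⟨hy.1, hy.2.trans (by norm_num)⟩
    have hcy : 0 < c * y ^ M₁ := mul_pos hc (rpow_pos_of_pos hy0 _)
    have h1 : y / k y ≤ y / (c * y ^ M₁) :=
      div_le_div_of_nonneg_left hy0.le hcy (key y hy)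
    have h2 : y / (c * y ^ M₁) = y ^ (1 - M₁) / c := by
      rw [Real.rpow_sub hy0, Real.rpow_one]
      field_simp
    have h3 : y ^ (1 - M₁) ≤ 1 :=
      Real.rpow_le_one hy0.le (hy.2.trans (by norm_num)) (by linarith)
    have h4 : y / k y ≤ 1 / c := by
      rw [h2] at h1
      calc y / k y ≤ y ^ (1 - M₁) / c := h1
        _ ≤ 1 / c := by gcongr
    rw [Real.norm_of_nonneg (div_nonneg hy0.le hky.le)]
    exact h4
  have hI2 : IntegrableOn (fun y => y / k y) (Icc (2⁻¹ : ℝ) 1) := by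
    apply ContinuousOn.integrableOn_Icc
    exact ContinuousOn.div continuousOn_id
      (hcont.mono (Icc_subset_Icc (by norm_num) le_rfl))
      (fun x hx => (hpos x ⟨lt_of_lt_of_le (by norm_num) hx.1, hx.2⟩).ne')
  apply (hI1.union hI2).mono_set
  intro x hx
  rcases le_or_gt x 2⁻¹ with h | h
  · exact Or.inl ⟨hx.1, h⟩
  · exact Or.inr ⟨h.le, hx.2.le⟩
end

section
/- (Pointwise bound for the barred weight) Let k satisfy k ∈ C⁰([0,1]) ∩ C¹([0,1)), k(1)=0, k>0 on [0,1), and (x−1)k'(x) ≤ M₂k(x) a.e. with M₂ ∈ (0,1). Then p̄(x) = ∫₀ˣ (y−1)/k(y) dy is well-defined and finite for every x ∈ [0,1] (the integrand (y−1)/k(y) is integrable on (0,1)), p̄ is nonincreasing, and ψ̄(x) = p̄(x) − 2‖p̄‖_∞ satisfies ψ̄ < 0 on [0,1]. -/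
open MeasureTheory Real Set intervalIntegral

/-- If `f` is differentiable on `[a,b]` with derivative nonnegative a.e.,
then `f a ≤ f b` (Goldowsky–Tonelli style). -/
lemma le_of_ae_deriv_nonneg {f f' : ℝ → ℝ} {a b : ℝ} (hab : a ≤ b)
    (hf : ∀ x ∈ Set.Icc a b, HasDerivAt f (f' x) x)
    (h : ∀ᵐ x, x ∈ Set.Icc a b → 0 ≤ f' x) : f a ≤ f b := by
  rcases eq_or_lt_of_le hab with rfl | hab'
  · exact le_refl _
  have main : ∀ δ : ℝ, 0 < δ → f a + δ * a ≤ f b + δ * b := by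
    intro δ hδ
    set g : ℝ → ℝ := fun x => f x + δ * x with hgdef
    have hgd : ∀ x ∈ Set.Icc a b, HasDerivAt g (f' x + δ) x := by
      intro x hx
      have h2 : HasDerivAt (fun y : ℝ => δ * y) δ x := by
        simpa using (hasDerivAt_id x).const_mul δ
      exact (hf x hx).add h2
    by_contra hcon
    push_neg at hcon
    have hcon' : g b < g a := hcon
    set N : Set ℝ := {x | ¬(x ∈ Set.Icc a b → 0 ≤ f' x)} with hNdef
    have hNnull : volume N = 0 := h
    have hNsub : N ⊆ Set.Icc a b := by
      intro x hx
      by_contra hx'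
      exact hx fun hmem => absurd hmem hx'
    have hgdiff : DifferentiableOn ℝ g N := fun x hx =>
      ((hgd x (hNsub hx)).differentiableAt).differentiableWithinAt
    have himg : volume (g '' N) = 0 :=
      MeasureTheory.addHaar_image_eq_zero_of_differentiableOn_of_addHaar_eq_zero
        volume hgdiff hNnull
    have hexc : ∃ c ∈ Set.Ioo (g b) (g a), c ∉ g '' N := by
      by_contra hsub
      push_neg at hsub
      have hss : Set.Ioo (g b) (g a) ⊆ g '' N := fun z hz => hsub z hz
      have hle : volume (Set.Ioo (g b) (g a)) ≤ volume (g '' N) := measure_mono hss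
      rw [himg, Real.volume_Ioo] at hle
      have hpos : (0 : ℝ) < g a - g b := by linarith
      exact absurd (le_antisymm hle zero_le) (ENNReal.ofReal_pos.2 hpos).ne'
    obtain ⟨c, hc, hcN⟩ := hexc
    have hgc : ContinuousOn g (Set.Icc a b) := fun x hx =>
      ((hgd x hx).continuousAt).continuousWithinAt
    set S : Set ℝ := Set.Icc a b ∩ g ⁻¹' {c} with hSdef
    have hSclosed : IsClosed S :=
      hgc.preimage_isClosed_of_isClosed isClosed_Icc isClosed_singleton
    have hSne : S.Nonempty := by
      obtain ⟨x, hx, hxc⟩ := intermediate_value_Icc' hab hgc ⟨hc.1.le, hc.2.le⟩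
      exact ⟨x, hx, hxc⟩
    have hSbdd : BddAbove S := BddAbove.mono Set.inter_subset_left bddAbove_Icc
    set x₀ := sSup S with hx₀def
    have hx₀S : x₀ ∈ S := hSclosed.csSup_mem hSne hSbdd
    have hx₀I : x₀ ∈ Set.Icc a b := hx₀S.1
    have hgx₀ : g x₀ = c := hx₀S.2
    have hx₀b : x₀ < b := by
      rcases lt_or_eq_of_le hx₀I.2 with h' | h'
      · exact h'
      · exact absurd (h' ▸ hgx₀) (ne_of_lt hc.1)
    have hkey : ∀ x ∈ Set.Ioc x₀ b, g x < c := by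
      intro x hx
      by_contra hge
      push_neg at hge
      have hxI : x ∈ Set.Icc a b := ⟨le_trans hx₀I.1 hx.1.le, hx.2⟩
      rcases eq_or_lt_of_le hge with heq | hlt
      · exact absurd (le_csSup hSbdd ⟨hxI, heq.symm⟩) (not_le.2 hx.1)
      · obtain ⟨y, hy, hyc⟩ :=
          intermediate_value_Icc' hx.2 (hgc.mono (Set.Icc_subset_Icc hxI.1 le_rfl))
            ⟨hc.1.le, hlt.le⟩
        have hyS : y ∈ S := ⟨⟨le_trans hxI.1 hy.1, hy.2⟩, hyc⟩
        exact absurd (le_csSup hSbdd hyS) (not_le.2 (lt_of_lt_of_le hx.1 hy.1))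
    -- x₀ is not in N
    have hx₀N : x₀ ∉ N := fun hmem => hcN ⟨x₀, hmem, hgx₀⟩
    have hf'x₀ : 0 ≤ f' x₀ := not_not.mp hx₀N hx₀I
    -- derivative from the right is nonpositive
    have hder : HasDerivWithinAt g (f' x₀ + δ) (Set.Ioi x₀) x₀ :=
      (hgd x₀ hx₀I).hasDerivWithinAt
    have htend := hasDerivWithinAt_iff_tendsto_slope.1 hder
    have hmem : Set.Ioo x₀ b ∈ nhdsWithin x₀ (Set.Ioi x₀ \ {x₀}) := by
      rw [Set.diff_singleton_eq_self (by simp : x₀ ∉ Set.Ioi x₀)]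
      exact Ioo_mem_nhdsGT_of_mem ⟨le_refl _, hx₀b⟩
    have hslope : ∀ᶠ x in nhdsWithin x₀ (Set.Ioi x₀ \ {x₀}), slope g x₀ x ≤ 0 := by
      filter_upwards [hmem] with x hx
      have h1 : g x < c := hkey x ⟨hx.1, hx.2.le⟩
      have h2 : g x - g x₀ < 0 := by rw [hgx₀]; linarith
      have h3 : 0 < x - x₀ := sub_pos.2 hx.1
      rw [slope_def_field]
      exact le_of_lt (div_neg_of_neg_of_pos (by rw [hgx₀]; linarith) h3)
    have hfinal : f' x₀ + δ ≤ 0 := by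
      have hne : (nhdsWithin x₀ (Set.Ioi x₀ \ {x₀})).NeBot := by
        rw [Set.diff_singleton_eq_self (by simp : x₀ ∉ Set.Ioi x₀)]; infer_instance
      exact le_of_tendsto htend hslope
    linarith
  -- take limit δ → 0
  have hlim : ∀ ε : ℝ, 0 < ε → f a ≤ f b + ε := by
    intro ε hε
    have hδ : 0 < ε / (b - a) := div_pos hε (by linarith)
    have := main _ hδ
    have hba : b - a > 0 := by linarith
    have : f a ≤ f b + ε / (b - a) * (b - a) := by linarith
    rwa [div_mul_cancel₀ _ (ne_of_gt hba)] at this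
  exact le_of_forall_pos_le_add hlim

/-- For `k` weakly degenerate at `1` with `M₂ ∈ (0,1)`: `(y-1)/k(y)` is
integrable on `(0,1)`, `p̄(x) = ∫₀ˣ (y-1)/k(y) dy` is nonincreasing, and
`ψ̄ = p̄ - 2‖p̄‖_∞ < 0` on `[0,1]`. -/
theorem stmt17 (k k' : ℝ → ℝ) (M₂ : ℝ) (hM : M₂ ∈ Set.Ioo (0 : ℝ) 1)
    (hc : ContinuousOn k (Set.Icc 0 1))
    (hpos : ∀ x ∈ Set.Ico (0 : ℝ) 1, 0 < k x) (hk1 : k 1 = 0)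
    (hd : ∀ x ∈ Set.Ioo (0 : ℝ) 1, HasDerivAt k (k' x) x)
    (hineq : ∀ᵐ x, x ∈ Set.Icc (0 : ℝ) 1 → (x - 1) * k' x ≤ M₂ * k x)
    (pbar ψbar : ℝ → ℝ) (M : ℝ)
    (hp : ∀ x, pbar x = ∫ y in (0 : ℝ)..x, (y - 1) / k y)
    (hM2 : M = sSup ((fun x => |pbar x|) '' Set.Icc 0 1))
    (hψ : ∀ x, ψbar x = pbar x - 2 * M) :
    IntegrableOn (fun y => (y - 1) / k y) (Set.Ioo 0 1) ∧
      AntitoneOn pbar (Set.Icc 0 1) ∧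
      ∀ x ∈ Set.Icc (0 : ℝ) 1, ψbar x < 0 := by
  obtain ⟨hM₂0, hM₂1⟩ := hM
  set f : ℝ → ℝ := fun y => (y - 1) / k y with hfdef
  have hc₀ : 0 < k (1/2) := hpos _ (by norm_num)
  -- monotonicity of k x * (1-x)^(-M₂) on [1/2, 1)
  have hglb : ∀ x ∈ Set.Ico (1/2 : ℝ) 1,
      k (1/2) * ((1 - (1/2:ℝ)) ^ (-M₂)) ≤ k x * (1 - x) ^ (-M₂) := by
    intro x hx
    refine le_of_ae_deriv_nonneg
      (f := fun t => k t * (1 - t) ^ (-M₂))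
      (f' := fun t => k' t * (1 - t) ^ (-M₂) + k t * (M₂ * (1 - t) ^ (-M₂ - 1)))
      hx.1 ?_ ?_
    · intro t ht
      have ht0 : (0:ℝ) < t := lt_of_lt_of_le (by norm_num) ht.1
      have ht1 : t < 1 := lt_of_le_of_lt ht.2 hx.2
      have h1t : (0:ℝ) < 1 - t := by linarith
      have hkd := hd t ⟨ht0, ht1⟩
      have hb : HasDerivAt (fun t : ℝ => 1 - t) (-1) t := by
        simpa using (hasDerivAt_id t).const_sub 1
      have hr := hb.rpow_const (p := -M₂) (Or.inl (ne_of_gt h1t))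
      have hr' : HasDerivAt (fun t : ℝ => (1 - t) ^ (-M₂)) (M₂ * (1 - t) ^ (-M₂ - 1)) t := by
        convert hr using 1; ring
      exact hkd.mul hr'
    · filter_upwards [hineq] with t ht htx
      have ht0 : (0:ℝ) < t := lt_of_lt_of_le (by norm_num) htx.1
      have ht1 : t < 1 := lt_of_le_of_lt htx.2 hx.2
      have h1t : (0:ℝ) < 1 - t := by linarith
      have hA : (0:ℝ) < (1 - t) ^ (-M₂ - 1) := Real.rpow_pos_of_pos h1t _
      have hineqt := ht ⟨ht0.le, ht1.le⟩
      have hEq : (1 - t) ^ (-M₂ - 1) * (1 - t) = (1 - t) ^ (-M₂) := by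
        rw [← Real.rpow_add_one (ne_of_gt h1t) (-M₂ - 1)]
        norm_num
      rw [← hEq]
      nlinarith [mul_le_mul_of_nonneg_left hineqt hA.le]
  -- pointwise lower bound for k near 1
  have klb : ∀ y ∈ Set.Ico (1/2 : ℝ) 1, k (1/2) * (1 - y) ^ M₂ ≤ k y := by
    intro y hy
    have h1y : (0:ℝ) < 1 - y := by linarith [hy.2]
    have h2 : (1:ℝ) ≤ ((1/2:ℝ)) ^ (-M₂) := by
      have := Real.rpow_le_rpow_of_exponent_ge (x := (1/2:ℝ)) (by norm_num) (by norm_num)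
        (show -M₂ ≤ 0 by linarith)
      simpa using this
    have h3 : k (1/2) ≤ k y * (1 - y) ^ (-M₂) := by
      have := hglb y hy
      norm_num at this
      nlinarith
    have h4 := mul_le_mul_of_nonneg_right h3 (Real.rpow_nonneg h1y.le M₂)
    calc k (1/2) * (1 - y) ^ M₂ ≤ k y * (1 - y) ^ (-M₂) * (1 - y) ^ M₂ := h4
      _ = k y := by
          rw [mul_assoc, ← Real.rpow_add h1y]
          norm_num
  -- integrability
  have hI1 : IntegrableOn f (Set.Icc 0 (1/2)) := by
    refine (ContinuousOn.integrableOn_compact isCompact_Icc ?_)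
    refine ContinuousOn.div (by fun_prop) (hc.mono (Set.Icc_subset_Icc le_rfl (by norm_num)))
      fun y hy => (hpos y ⟨hy.1, lt_of_le_of_lt hy.2 (by norm_num)⟩).ne'
  have hBcont : Continuous (fun y : ℝ => (1 - y) ^ (1 - M₂) / k (1/2)) := by
    refine Continuous.div_const ?_ _
    exact (continuous_const.sub continuous_id).rpow_const fun y => Or.inr (by linarith)
  have hI2 : IntegrableOn f (Set.Ico (1/2) 1) := by
    have hBint : IntegrableOn (fun y : ℝ => (1 - y) ^ (1 - M₂) / k (1/2))
        (Set.Ico (1/2 : ℝ) 1) :=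
      (hBcont.integrableOn_Icc).mono_set Set.Ico_subset_Icc_self
    have hmeas : AEStronglyMeasurable f (volume.restrict (Set.Ico (1/2 : ℝ) 1)) := by
      refine ContinuousOn.aestronglyMeasurable ?_ measurableSet_Ico
      refine ContinuousOn.div (by fun_prop)
        (hc.mono (fun y hy => ⟨by linarith [hy.1], hy.2.le⟩))
        fun y hy => (hpos y ⟨by linarith [hy.1], hy.2⟩).ne'
    refine Integrable.mono' hBint hmeas ?_
    rw [ae_restrict_iff' measurableSet_Ico]
    filter_upwards with y hy
    have hky : 0 < k y := hpos y ⟨by linarith [hy.1], hy.2⟩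
    have h1y : (0:ℝ) < 1 - y := by linarith [hy.2]
    have hlb := klb y hy
    have hlb0 : 0 < k (1/2) * (1 - y) ^ M₂ := mul_pos hc₀ (Real.rpow_pos_of_pos h1y _)
    have hnorm : ‖f y‖ = (1 - y) / k y := by
      rw [hfdef]
      simp only [Real.norm_eq_abs, abs_div, abs_of_pos hky, abs_of_nonpos (by linarith : y - 1 ≤ 0)]
      ring_nf
    rw [hnorm]
    have step1 : (1 - y) / k y ≤ (1 - y) / (k (1/2) * (1 - y) ^ M₂) := by
      gcongr
    have step2 : (1 - y) / (k (1/2) * (1 - y) ^ M₂) = (1 - y) ^ (1 - M₂) / k (1/2) := by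
      rw [Real.rpow_sub h1y, Real.rpow_one]
      field_simp
    linarith [step1, step2.le]
  have hIoo : IntegrableOn f (Set.Ioo 0 1) := by
    refine (hI1.union hI2).mono_set ?_
    intro y hy
    rcases le_or_gt y (1/2) with h | h
    · exact Or.inl ⟨hy.1.le, h⟩
    · exact Or.inr ⟨h.le, hy.2⟩
  have hIoc01 : IntegrableOn f (Set.Ioc 0 1) :=
    (integrableOn_Ioc_iff_integrableOn_Ioo).2 hIoo
  have hII : ∀ u v : ℝ, 0 ≤ u → u ≤ v → v ≤ 1 → IntervalIntegrable f volume u v := by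
    intro u v hu huv hv
    rw [intervalIntegrable_iff_integrableOn_Ioc_of_le huv]
    exact hIoc01.mono_set (Set.Ioc_subset_Ioc hu hv)
  -- antitone
  have hanti : AntitoneOn pbar (Set.Icc 0 1) := by
    intro a ha b hb hab
    rw [hp a, hp b]
    have h0a := hII 0 a le_rfl ha.1 ha.2
    have hab' := hII a b ha.1 hab hb.2
    rw [← intervalIntegral.integral_add_adjacent_intervals h0a hab']
    have hneg : 0 ≤ -∫ y in a..b, f y := by
      rw [← intervalIntegral.integral_neg]
      refine intervalIntegral.integral_nonneg hab fun u hu => ?_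
      have hu1 : u ≤ 1 := le_trans hu.2 hb.2
      have hku : 0 ≤ k u := by
        rcases lt_or_eq_of_le hu1 with h' | h'
        · exact (hpos u ⟨le_trans ha.1 hu.1, h'⟩).le
        · rw [h', hk1]
      have : f u ≤ 0 := div_nonpos_iff.2 (Or.inr ⟨by simpa using sub_nonpos.2 hu1, hku⟩)
      linarith
    linarith
  refine ⟨hIoo, hanti, ?_⟩
  -- psi negative
  have hII01 := hII 0 1 le_rfl (by norm_num) le_rfl
  have hpb1 : pbar 1 < 0 := by
    rw [hp 1]
    have hposneg : 0 < ∫ y in (0:ℝ)..1, -f y := by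
      refine intervalIntegral.intervalIntegral_pos_of_pos_on hII01.neg ?_ (by norm_num)
      intro x hx
      have : f x < 0 := div_neg_of_neg_of_pos (by linarith [hx.2]) (hpos x ⟨hx.1.le, hx.2⟩)
      linarith
    rw [intervalIntegral.integral_neg] at hposneg
    linarith
  have hbound : ∀ x ∈ Set.Icc (0:ℝ) 1, |pbar x| ≤ ∫ y in (0:ℝ)..1, |f y| := by
    intro x hx
    rw [hp x]
    have habs1 : |∫ y in (0:ℝ)..x, f y| ≤ ∫ y in (0:ℝ)..x, |f y| :=
      intervalIntegral.abs_integral_le_integral_abs hx.1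
    have habs2 : (∫ y in (0:ℝ)..x, |f y|) ≤ ∫ y in (0:ℝ)..1, |f y| := by
      refine intervalIntegral.integral_mono_interval le_rfl hx.1 hx.2 ?_ hII01.abs
      filter_upwards with y using abs_nonneg _
    exact le_trans habs1 habs2
  have hbdd : BddAbove ((fun x => |pbar x|) '' Set.Icc 0 1) := by
    refine ⟨∫ y in (0:ℝ)..1, |f y|, ?_⟩
    rintro z ⟨x, hx, rfl⟩
    exact hbound x hx
  have hMge : ∀ x ∈ Set.Icc (0:ℝ) 1, |pbar x| ≤ M := by
    intro x hx
    rw [hM2]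
    exact le_csSup hbdd ⟨x, hx, rfl⟩
  have hMpos : 0 < M :=
    lt_of_lt_of_le (abs_pos.2 hpb1.ne) (hMge 1 ⟨by norm_num, le_rfl⟩)
  intro x hx
  rw [hψ]
  have h1 := hMge x hx
  have h2 := le_abs_self (pbar x)
  linarith
end
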